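/- Let y ∈ ℝ^n and let i be an index such that |y_t| ≤ |y_i| for all t and y_i ≠ 0. Let θ ≥ 0 and suppose at most s indices t satisfy |y_t| > θ·|y_i|. Then ‖y‖₂² ≤ (s + n·θ²)·y_i². Consequently, if y belongs to a linear subspace W of ℝ^n, then the i-th leverage score of W satisfies ‖P_W e_i‖₂² ≥ 1/(s + n·θ²). -/

import Mathlib

/-- if y has maximal coordinate (in magnitude) y_i ≠ 0 and at most
s coordinates exceed θ·|y_i| in magnitude, then ‖y‖² ≤ (s + n·θ²)·y_i²; hence if
y lies in a subspace W, the i-th leverage score of W is at least 1/(s + n·θ²). -/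
theorem norm_sq_le_and_leverage_lower_bound
    (n s : ℕ) (y : EuclideanSpace ℝ (Fin n)) (i : Fin n)
    (hmax : ∀ t : Fin n, |y t| ≤ |y i|) (hne : y i ≠ 0)
    (θ : ℝ) (hθ : 0 ≤ θ)
    (hfew : {t : Fin n | θ * |y i| < |y t|}.ncard ≤ s) :
    ‖y‖ ^ 2 ≤ ((s : ℝ) + n * θ ^ 2) * (y i) ^ 2 ∧
    ∀ W : Submodule ℝ (EuclideanSpace ℝ (Fin n)), y ∈ W →
      1 / ((s : ℝ) + n * θ ^ 2) ≤
        ‖(W.orthogonalProjectionOnto (EuclideanSpace.single i 1) :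
          EuclideanSpace ℝ (Fin n))‖ ^ 2 := by
  classical
  set F : Finset (Fin n) := Finset.univ.filter (fun t => θ * |y i| < |y t|) with hF
  have hcard : (F.card : ℝ) ≤ s := by
    have : {t : Fin n | θ * |y i| < |y t|}.ncard = F.card := by
      rw [Set.ncard_eq_toFinset_card']
      congr 1
      ext t
      simp [hF]
    exact_mod_cast this ▸ hfew
  have hyi2 : (0:ℝ) < (y i)^2 := by positivity
  -- first part
  have hnorm : ‖y‖ ^ 2 = ∑ t, (y t)^2 := by
    rw [EuclideanSpace.norm_eq, Real.sq_sqrt (by positivity)]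
    simp [sq_abs]
  have hbig : ∀ t ∈ F, (y t)^2 ≤ (y i)^2 := by
    intro t _
    rw [← sq_abs (y t), ← sq_abs (y i)]
    exact pow_le_pow_left₀ (abs_nonneg _) (hmax t) 2
  have hsmall : ∀ t ∈ Fᶜ, (y t)^2 ≤ θ^2 * (y i)^2 := by
    intro t ht
    have : |y t| ≤ θ * |y i| := by
      simp only [hF, Finset.mem_compl, Finset.mem_filter, Finset.mem_univ, true_and,
        not_lt] at ht
      exact ht
    calc (y t)^2 = |y t|^2 := (sq_abs _).symm
      _ ≤ (θ * |y i|)^2 := pow_le_pow_left₀ (abs_nonneg _) this 2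
      _ = θ^2 * (y i)^2 := by rw [mul_pow, sq_abs]
  have h1 : ‖y‖ ^ 2 ≤ ((s : ℝ) + n * θ ^ 2) * (y i) ^ 2 := by
    rw [hnorm, ← Finset.sum_add_sum_compl F]
    have b1 : ∑ t ∈ F, (y t)^2 ≤ (s : ℝ) * (y i)^2 := by
      calc ∑ t ∈ F, (y t)^2 ≤ ∑ _t ∈ F, (y i)^2 := Finset.sum_le_sum hbig
        _ = F.card * (y i)^2 := by rw [Finset.sum_const, nsmul_eq_mul]
        _ ≤ (s : ℝ) * (y i)^2 := by
            exact mul_le_mul_of_nonneg_right hcard hyi2.le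
    have b2 : ∑ t ∈ Fᶜ, (y t)^2 ≤ (n : ℝ) * θ^2 * (y i)^2 := by
      calc ∑ t ∈ Fᶜ, (y t)^2 ≤ ∑ _t ∈ Fᶜ, θ^2 * (y i)^2 := Finset.sum_le_sum hsmall
        _ = Fᶜ.card * (θ^2 * (y i)^2) := by rw [Finset.sum_const, nsmul_eq_mul]
        _ ≤ (n : ℝ) * (θ^2 * (y i)^2) := by
            apply mul_le_mul_of_nonneg_right _ (by positivity)
            exact_mod_cast (Fᶜ.card_le_univ.trans_eq (by simp))
        _ = (n : ℝ) * θ^2 * (y i)^2 := by ring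
    calc ∑ t ∈ F, (y t)^2 + ∑ t ∈ Fᶜ, (y t)^2
        ≤ (s : ℝ) * (y i)^2 + (n : ℝ) * θ^2 * (y i)^2 := add_le_add b1 b2
      _ = ((s : ℝ) + n * θ ^ 2) * (y i) ^ 2 := by ring
  refine ⟨h1, fun W hyW => ?_⟩
  set D : ℝ := (s : ℝ) + n * θ ^ 2 with hD
  have hDpos : 0 < D := by
    rcases eq_or_lt_of_le hθ with h0 | h0
    · -- θ = 0 : then i ∈ F so s ≥ 1
      have hiF : i ∈ F := by
        simp only [hF, Finset.mem_filter, Finset.mem_univ, true_and, ← h0, zero_mul]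
        exact abs_pos.mpr hne
      have : (1:ℝ) ≤ F.card := by exact_mod_cast Finset.card_pos.mpr ⟨i, hiF⟩
      have hs : (1:ℝ) ≤ s := this.trans hcard
      have : (0:ℝ) ≤ (n:ℝ) * θ^2 := by positivity
      linarith
    · have hn : 0 < n := i.pos
      have : (0:ℝ) < (n:ℝ) * θ^2 := by positivity
      have : (0:ℝ) ≤ (s:ℝ) := Nat.cast_nonneg s
      linarith [mul_pos (by exact_mod_cast i.pos : (0:ℝ) < n) (pow_pos h0 2)]
  set p : EuclideanSpace ℝ (Fin n) :=
    (W.orthogonalProjectionOnto (EuclideanSpace.single i 1) : EuclideanSpace ℝ (Fin n)) with hp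
  have hinner : inner ℝ p y = y i := by
    have h2 : (W.orthogonalProjectionOnto y : EuclideanSpace ℝ (Fin n)) = y :=
      Submodule.starProjection_eq_self_iff.mpr hyW
    have h3 : (inner ℝ p y : ℝ) =
        inner ℝ (EuclideanSpace.single i (1:ℝ)) ((W.orthogonalProjectionOnto y : EuclideanSpace ℝ (Fin n))) := by
      exact Submodule.inner_starProjection_left_eq_right W _ _
    rw [h3, h2, EuclideanSpace.inner_single_left]
    simp
  have hcs : (y i)^2 ≤ ‖p‖^2 * ‖y‖^2 := by
    calc (y i)^2 = (inner ℝ p y : ℝ)^2 := by rw [hinner]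
      _ ≤ (‖p‖ * ‖y‖)^2 := by
          apply sq_le_sq'
          · linarith [neg_abs_le (inner ℝ p y : ℝ), abs_real_inner_le_norm p y]
          · exact (le_abs_self _).trans (abs_real_inner_le_norm p y)
      _ = ‖p‖^2 * ‖y‖^2 := by ring
  have key : (y i)^2 ≤ ‖p‖^2 * (D * (y i)^2) :=
    hcs.trans (mul_le_mul_of_nonneg_left h1 (by positivity))
  rw [div_le_iff₀ hDpos]
  have := (mul_le_mul_iff_of_pos_right hyi2).mp (by linarith [key] : 1 * (y i)^2 ≤ (‖p‖^2 * D) * (y i)^2)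
  linarith
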